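/- arXiv:2302.12905 — 4 statements merged into one kernel-verified Lean document; each statement's English description precedes it below -/
import Mathlib

section
/- A short exact sequence of R-modules is pure if and only if its character sequence (obtained by applying Hom_ℤ(−, ℚ/ℤ)) is a split short exact sequence of right R-modules. -/
universe u

open CategoryTheory TensorProduct

namespace GorensteinPaper

variable (R : Type u) [CommRing R]

/-- `i`, `p` form a short exact sequence `0 → A → B → C → 0` of `R`-modules. -/
def IsSES {A B C : ModuleCat.{u} R} (i : A ⟶ B) (p : B ⟶ C) : Prop :=
  Function.Injective i ∧ Function.Surjective p ∧ Function.Exact i p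

/-- `Ext¹_R(G, M) = 0`. -/
def Ext1Zero (G M : ModuleCat.{u} R) : Prop :=
  Subsingleton (((Ext R (ModuleCat.{u} R) 1).obj (Opposite.op G)).obj M)

/-- `Tor_n^R(E, N) = 0`. -/
def TorZero (n : ℕ) (E N : ModuleCat.{u} R) : Prop :=
  Limits.IsZero (((Tor (ModuleCat.{u} R) n).obj E).obj N)

/-- `M` is projectively coresolved Gorenstein flat (PGF): it is a syzygy of an exact
complex of projective modules which stays exact after tensoring with any injective module. -/
def IsPGF (M : ModuleCat.{u} R) : Prop :=
  ∃ (P : ℤ → ModuleCat.{u} R) (d : ∀ i : ℤ, P (i + 1) ⟶ P i),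
    (∀ i, Module.Projective R (P i)) ∧
    (∀ i : ℤ, Function.Exact (d (i + 1)) (d i)) ∧
    (∀ (E : ModuleCat.{u} R), Module.Injective R E →
      ∀ i : ℤ, Function.Exact (LinearMap.lTensor E (d (i + 1)).hom) (LinearMap.lTensor E (d i).hom)) ∧
    Nonempty (M ≃ₗ[R] LinearMap.range (d 0).hom)

/-- `M` is Gorenstein flat: it is a syzygy of an exact complex of flat modules which
stays exact after tensoring with any injective module. -/
def IsGF (M : ModuleCat.{u} R) : Prop :=
  ∃ (P : ℤ → ModuleCat.{u} R) (d : ∀ i : ℤ, P (i + 1) ⟶ P i),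
    (∀ i, Module.Flat R (P i)) ∧
    (∀ i : ℤ, Function.Exact (d (i + 1)) (d i)) ∧
    (∀ (E : ModuleCat.{u} R), Module.Injective R E →
      ∀ i : ℤ, Function.Exact (LinearMap.lTensor E (d (i + 1)).hom) (LinearMap.lTensor E (d i).hom)) ∧
    Nonempty (M ≃ₗ[R] LinearMap.range (d 0).hom)

/-- `M` is Gorenstein projective: a syzygy of a `Hom(-, projective)`-exact exact complex of
projective modules. -/
def IsGorensteinProjective (M : ModuleCat.{u} R) : Prop :=
  ∃ (P : ℤ → ModuleCat.{u} R) (d : ∀ i : ℤ, P (i + 1) ⟶ P i),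
    (∀ i, Module.Projective R (P i)) ∧
    (∀ i : ℤ, Function.Exact (d (i + 1)) (d i)) ∧
    (∀ (Q : ModuleCat.{u} R), Module.Projective R Q →
      ∀ i : ℤ, Function.Exact (LinearMap.lcomp R Q (d i).hom) (LinearMap.lcomp R Q (d (i + 1)).hom)) ∧
    Nonempty (M ≃ₗ[R] LinearMap.range (d 0).hom)

/-- `M` is Ding projective: a syzygy of a `Hom(-, flat)`-exact exact complex of
projective modules. -/
def IsDingProjective (M : ModuleCat.{u} R) : Prop :=
  ∃ (P : ℤ → ModuleCat.{u} R) (d : ∀ i : ℤ, P (i + 1) ⟶ P i),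
    (∀ i, Module.Projective R (P i)) ∧
    (∀ i : ℤ, Function.Exact (d (i + 1)) (d i)) ∧
    (∀ (Q : ModuleCat.{u} R), Module.Flat R Q →
      ∀ i : ℤ, Function.Exact (LinearMap.lcomp R Q (d i).hom) (LinearMap.lcomp R Q (d (i + 1)).hom)) ∧
    Nonempty (M ≃ₗ[R] LinearMap.range (d 0).hom)

/-- Resolution dimension of `M` with respect to a class `C` is at most `n`. -/
def ResDimLE (C : ModuleCat.{u} R → Prop) : ℕ → ModuleCat.{u} R → Prop
  | 0, M => C M
  | n + 1, M => ResDimLE C n M ∨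
      ∃ (K F : ModuleCat.{u} R) (i : K ⟶ F) (p : F ⟶ M),
        IsSES R i p ∧ C F ∧ ResDimLE C n K

/-- flat dimension at most `n`. -/
def FdLE (n : ℕ) (M : ModuleCat.{u} R) : Prop :=
  ResDimLE R (fun N => Module.Flat R N) n M

/-- projective dimension at most `n`. -/
def PdLE (n : ℕ) (M : ModuleCat.{u} R) : Prop :=
  ResDimLE R (fun N => Module.Projective R N) n M

/-- Gorenstein flat dimension at most `n`. -/
def GfdLE (n : ℕ) (M : ModuleCat.{u} R) : Prop :=
  ResDimLE R (IsGF R) n M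

/-- PGF dimension at most `n`. -/
def PGFdLE (n : ℕ) (M : ModuleCat.{u} R) : Prop :=
  ResDimLE R (IsPGF R) n M

/-- `M` lies in the right `Ext`-orthogonal class of the PGF modules. -/
def InPGFPerp (M : ModuleCat.{u} R) : Prop :=
  ∀ G : ModuleCat.{u} R, IsPGF R G → Ext1Zero R G M

/-- `i`, `p` form a pure short exact sequence. -/
def IsPureSES {A B C : ModuleCat.{u} R} (i : A ⟶ B) (p : B ⟶ C) : Prop :=
  IsSES R i p ∧ ∀ X : ModuleCat.{u} R, Function.Injective (LinearMap.lTensor X i.hom)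



section Helpers

variable {R : Type u} [CommRing R] {M N : Type u} [AddCommGroup M] [AddCommGroup N]
  [Module R M] [Module R N]

/-- Flip a map into a character module. -/
noncomputable def cFlip (f : M →ₗ[R] CharacterModule N) : N →ₗ[R] CharacterModule M where
  toFun n :=
  { toFun := fun m => f m n
    map_zero' := by show f 0 n = 0; rw [map_zero]; rfl
    map_add' := fun a b => by show f (a+b) n = f a n + f b n; rw [map_add]; rfl }
  map_add' n n' := DFunLike.ext _ _ fun m => (f m).map_add n n'
  map_smul' r n := DFunLike.ext _ _ fun m => by
    simp only [RingHom.id_apply, CharacterModule.smul_apply, AddMonoidHom.coe_mk,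
      ZeroHom.coe_mk]
    exact (congr($(f.map_smul r m) n)).symm

@[simp] lemma cFlip_apply (f : M →ₗ[R] CharacterModule N) (n : N) (m : M) :
    cFlip f n m = f m n := rfl

end Helpers

/-- a short exact sequence is pure if and only if its character sequence
(obtained by applying `Hom_ℤ(-, ℚ/ℤ)`) is a split short exact sequence. -/
theorem stmt5 {A B C : ModuleCat.{u} R} (i : A ⟶ B) (p : B ⟶ C) (h : IsSES R i p) :
    IsPureSES R i p ↔
      (IsSES R (ModuleCat.ofHom (CharacterModule.dual (p.hom : B →ₗ[R] C)))
          (ModuleCat.ofHom (CharacterModule.dual (i.hom : A →ₗ[R] B))) ∧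
        ∃ s : CharacterModule A →ₗ[R] CharacterModule B,
          (CharacterModule.dual (i.hom : A →ₗ[R] B)) ∘ₗ s = LinearMap.id) := by
  obtain ⟨hi, hp, hex⟩ := h
  constructor
  · rintro ⟨-, hpure⟩
    refine ⟨⟨?_, ?_, ?_⟩, ?_⟩
    · -- `dual p` is injective
      show Function.Injective ⇑(CharacterModule.dual (p.hom : B →ₗ[R] C))
      intro c₁ c₂ hc
      refine DFunLike.ext _ _ fun x => ?_
      obtain ⟨b, rfl⟩ := hp x
      exact DFunLike.congr_fun hc b
    · -- `dual i` is surjective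
      show Function.Surjective ⇑(CharacterModule.dual (i.hom : A →ₗ[R] B))
      exact CharacterModule.dual_surjective_of_injective _ hi
    · -- exactness
      show Function.Exact ⇑(CharacterModule.dual (p.hom : B →ₗ[R] C))
        ⇑(CharacterModule.dual (i.hom : A →ₗ[R] B))
      intro c
      constructor
      · intro hc
        have hcongr : ∀ u v : B, p u = p v → c u = c v := by
          intro u v huv
          have h0 : p (u - v) = 0 := by rw [map_sub, huv, sub_self]
          obtain ⟨a, ha⟩ := (hex (u - v)).mp h0
          have hz : c (u - v) = 0 := by
            rw [← ha]
            exact DFunLike.congr_fun hc a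
          rw [map_sub, sub_eq_zero] at hz
          exact hz
        refine ⟨{ toFun := fun x => c (Function.surjInv hp x)
                  map_zero' := by
                    show c (Function.surjInv hp 0) = 0
                    rw [hcongr (Function.surjInv hp 0) 0
                      (by rw [Function.surjInv_eq hp, map_zero]), map_zero]
                  map_add' := fun x y => by
                    show c (Function.surjInv hp (x + y)) =
                      c (Function.surjInv hp x) + c (Function.surjInv hp y)
                    rw [← map_add c]
                    exact hcongr _ _ (by
                      rw [Function.surjInv_eq hp, map_add,
                        Function.surjInv_eq hp, Function.surjInv_eq hp]) }, ?_⟩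
        refine DFunLike.ext _ _ fun b => ?_
        exact hcongr _ _ (Function.surjInv_eq hp _)
      · rintro ⟨d, rfl⟩
        refine DFunLike.ext _ _ fun a => ?_
        have h0 : p (i a) = 0 := (hex (i a)).mpr ⟨a, rfl⟩
        show d (p (i a)) = 0
        rw [h0, map_zero]
    · -- the splitting
      have h1 : Function.Injective
          (LinearMap.rTensor (CharacterModule A) (i.hom : A →ₗ[R] B)) :=
        (LinearMap.lTensor_inj_iff_rTensor_inj (CharacterModule A)
          (f := (i.hom : A →ₗ[R] B))).mp (hpure (ModuleCat.of R (CharacterModule A)))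
      obtain ⟨φ, hφ⟩ := (rTensor_injective_iff_lcomp_surjective
          (B := CharacterModule A) (f := (i.hom : A →ₗ[R] B))).mp h1
        (cFlip (LinearMap.id : CharacterModule A →ₗ[R] CharacterModule A))
      refine ⟨cFlip φ, ?_⟩
      refine LinearMap.ext fun χ => DFunLike.ext _ _ fun a => ?_
      have := DFunLike.congr_fun (DFunLike.congr_fun hφ a) χ
      exact this
  · rintro ⟨-, s, hs⟩
    refine ⟨⟨hi, hp, hex⟩, fun X => ?_⟩
    rw [LinearMap.lTensor_inj_iff_rTensor_inj (X : Type u) (f := (i.hom : A →ₗ[R] B)),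
      rTensor_injective_iff_lcomp_surjective]
    intro g
    refine ⟨cFlip (s ∘ₗ cFlip g), ?_⟩
    refine LinearMap.ext fun a => DFunLike.ext _ _ fun x => ?_
    have := DFunLike.congr_fun (DFunLike.congr_fun hs (cFlip g x)) a
    exact this

end GorensteinPaper
end

section
/- The class of modules of flat dimension at most n is closed under pure submodules and pure quotients. -/
universe u

open CategoryTheory TensorProduct

set_option maxHeartbeats 1000000

namespace GorensteinPaper

variable (R : Type u) [CommRing R]

/-! ### Auxiliary machinery for `stmt6` -/

section Stmt6Aux

open LinearMap

variable {R}

private lemma lr_comm6 {M M' N N' : Type u} [AddCommGroup M] [AddCommGroup M'] [AddCommGroup N]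
    [AddCommGroup N'] [Module R M] [Module R M'] [Module R N] [Module R N']
    (f : M →ₗ[R] M') (g : N →ₗ[R] N') (x : M ⊗[R] N) :
    lTensor M' g (rTensor N f x) = rTensor N' f (lTensor M g x) := by
  rw [← LinearMap.comp_apply, ← LinearMap.comp_apply, lTensor_comp_rTensor, rTensor_comp_lTensor]

private lemma flat_prod6 (M N : Type u) [AddCommGroup M] [AddCommGroup N] [Module R M]
    [Module R N] [Module.Flat R M] [Module.Flat R N] : Module.Flat R (M × N) := by
  rw [Module.Flat.iff_rTensor_injective']
  intro I
  have hnat : ∀ x : I ⊗[R] (M × N),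
      (TensorProduct.prodRight R R R M N) (rTensor (M × N) I.subtype x)
        = Prod.map (rTensor M I.subtype) (rTensor N I.subtype)
            ((TensorProduct.prodRight R R I M N) x) := by
    intro x
    induction x using TensorProduct.induction_on with
    | zero => simp [Prod.map]; rfl
    | tmul a b => obtain ⟨b1, b2⟩ := b; simp [Prod.map]
    | add x y hx hy => simp [map_add, hx, hy, Prod.map]
  intro x y hxy
  have h := congrArg (TensorProduct.prodRight R R R M N) hxy
  rw [hnat, hnat] at h
  have hinj : Function.Injective
      (Prod.map (rTensor M I.subtype) (rTensor N I.subtype)) :=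
    Function.Injective.prodMap
      (Module.Flat.rTensor_preserves_injective_linearMap _ I.injective_subtype)
      (Module.Flat.rTensor_preserves_injective_linearMap _ I.injective_subtype)
  exact (TensorProduct.prodRight R R I M N).injective (hinj h)

private lemma chase_quotient6 {A B C : Type u} [AddCommGroup A] [AddCommGroup B] [AddCommGroup C]
    [Module R A] [Module R B] [Module R C] (i : A →ₗ[R] B) (p : B →ₗ[R] C)
    (hi : Function.Injective i) (hp : Function.Surjective p) (hex : Function.Exact i p)
    [Module.Flat R C] (X : Type u) [AddCommGroup X] [Module R X]
    (P Y : Type u) [AddCommGroup P] [AddCommGroup Y] [Module R P] [Module R Y]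
    [Module.Flat R P] (κ : Y →ₗ[R] P) (π : P →ₗ[R] X)
    (hκ : Function.Injective κ) (hπ : Function.Surjective π) (hκπ : Function.Exact κ π) :
    Function.Injective (lTensor X i) := by
  rw [injective_iff_map_eq_zero]
  intro x hx
  obtain ⟨u, hu⟩ := rTensor_surjective A (g := π) hπ x
  have h1 : rTensor B π (lTensor P i u) = 0 := by
    rw [← lr_comm6 π i u, hu, hx]
  have hex2 : Function.Exact (rTensor B κ) (rTensor B π) := rTensor_exact B hκπ hπ
  obtain ⟨b', hb'⟩ := (hex2 (lTensor P i u)).mp h1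
  have h3 : lTensor Y p b' = 0 := by
    have hrc : rTensor C κ (lTensor Y p b') = 0 := by
      rw [← lr_comm6 κ p b', hb', ← LinearMap.comp_apply, ← lTensor_comp]
      have hpi : p ∘ₗ i = 0 := by ext a; exact hex.apply_apply_eq_zero a
      rw [hpi, lTensor_zero]; rfl
    exact Module.Flat.rTensor_preserves_injective_linearMap (M := C) κ hκ
      (by rw [hrc, map_zero])
  have hex3 : Function.Exact (lTensor Y i) (lTensor Y p) := lTensor_exact Y hex hp
  obtain ⟨a', ha'⟩ := (hex3 b').mp h3
  have h4 : lTensor P i (rTensor A κ a') = lTensor P i u := by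
    rw [lr_comm6 κ i a', ha', hb']
  have h5 : rTensor A κ a' = u :=
    Module.Flat.lTensor_preserves_injective_linearMap (M := P) i hi h4
  have hπκ : (π ∘ₗ κ : Y →ₗ[R] X) = 0 := by
    ext y; exact hκπ.apply_apply_eq_zero y
  rw [← hu, ← h5, ← LinearMap.comp_apply, ← rTensor_comp, hπκ, rTensor_zero]
  rfl

/-- A short exact sequence with flat cokernel is pure. -/
private lemma pure_of_flat_quotient6 {A B C : Type u} [AddCommGroup A] [AddCommGroup B]
    [AddCommGroup C] [Module R A] [Module R B] [Module R C] (i : A →ₗ[R] B) (p : B →ₗ[R] C)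
    (hi : Function.Injective i) (hp : Function.Surjective p) (hex : Function.Exact i p)
    [Module.Flat R C] (X : Type u) [AddCommGroup X] [Module R X] :
    Function.Injective (lTensor X i) :=
  chase_quotient6 i p hi hp hex X (X →₀ R) (ker (Finsupp.linearCombination R (_root_.id : X → X)))
    (Submodule.subtype _) (Finsupp.linearCombination R (_root_.id : X → X))
    (Submodule.injective_subtype _) (Finsupp.linearCombination_id_surjective R X)
    (LinearMap.exact_subtype_ker_map _)

private lemma chase_syzygy6 {A B ΩA ΩB FA FB : Type u}
    [AddCommGroup A] [AddCommGroup B] [AddCommGroup ΩA] [AddCommGroup ΩB]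
    [AddCommGroup FA] [AddCommGroup FB]
    [Module R A] [Module R B] [Module R ΩA] [Module R ΩB] [Module R FA] [Module R FB]
    [Module.Flat R FA] [Module.Flat R FB]
    (i : A →ₗ[R] B) (jA : ΩA →ₗ[R] FA) (qA : FA →ₗ[R] A) (jB : ΩB →ₗ[R] FB)
    (qB : FB →ₗ[R] B) (σ : ΩA →ₗ[R] ΩB) (τ : FA →ₗ[R] FB)
    (hjA : Function.Injective jA) (hqA : Function.Surjective qA)
    (hexA : Function.Exact jA qA) (hexB : Function.Exact jB qB)
    (hc1 : τ ∘ₗ jA = jB ∘ₗ σ) (hc2 : i ∘ₗ qA = qB ∘ₗ τ)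
    (hpure : ∀ (Z : Type u) [AddCommGroup Z] [Module R Z], Function.Injective (lTensor Z i))
    (hτ : ∀ (Z : Type u) [AddCommGroup Z] [Module R Z], Function.Injective (lTensor Z τ))
    (X : Type u) [AddCommGroup X] [Module R X]
    (P Y : Type u) [AddCommGroup P] [AddCommGroup Y] [Module R P] [Module R Y]
    [Module.Flat R P] (κ : Y →ₗ[R] P) (π : P →ₗ[R] X)
    (hκ : Function.Injective κ) (hπ : Function.Surjective π)
    (hκπ : Function.Exact κ π) :
    Function.Injective (lTensor X σ) := by
  rw [injective_iff_map_eq_zero]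
  intro x hx
  have ha : lTensor X jA x = 0 := by
    apply hτ X
    have hcx : lTensor X τ (lTensor X jA x) = 0 := by
      rw [← LinearMap.comp_apply, ← lTensor_comp, hc1, lTensor_comp, LinearMap.comp_apply,
        hx, map_zero]
    rw [hcx, map_zero]
  obtain ⟨u, hu⟩ := rTensor_surjective ΩA (g := π) hπ x
  have h1 : rTensor FA π (lTensor P jA u) = 0 := by rw [← lr_comm6 π jA u, hu, ha]
  have hex2 : Function.Exact (rTensor FA κ) (rTensor FA π) := rTensor_exact FA hκπ hπ
  obtain ⟨v, hv⟩ := (hex2 _).mp h1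
  have h2 : rTensor ΩB π (lTensor P σ u) = 0 := by rw [← lr_comm6 π σ u, hu, hx]
  have hex4 : Function.Exact (rTensor ΩB κ) (rTensor ΩB π) := rTensor_exact ΩB hκπ hπ
  obtain ⟨y, hy⟩ := (hex4 _).mp h2
  have h6 : rTensor FB κ (lTensor Y τ v) = rTensor FB κ (lTensor Y jB y) := by
    rw [← lr_comm6 κ τ v, hv, ← lr_comm6 κ jB y, hy, ← LinearMap.comp_apply, ← lTensor_comp,
      hc1, lTensor_comp, LinearMap.comp_apply]
  have h7 : lTensor Y τ v = lTensor Y jB y :=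
    Module.Flat.rTensor_preserves_injective_linearMap (M := FB) κ hκ h6
  have h8 : lTensor Y i (lTensor Y qA v) = 0 := by
    rw [← LinearMap.comp_apply, ← lTensor_comp, hc2, lTensor_comp, LinearMap.comp_apply, h7,
      ← LinearMap.comp_apply, ← lTensor_comp]
    have hqbjb : qB ∘ₗ jB = 0 := by ext t; exact hexB.apply_apply_eq_zero t
    rw [hqbjb, lTensor_zero]; rfl
  have h9 : lTensor Y qA v = 0 := hpure Y
    (show lTensor Y i (lTensor Y qA v) = lTensor Y i 0 by rw [h8, map_zero])
  have hex3 : Function.Exact (lTensor Y jA) (lTensor Y qA) := lTensor_exact Y hexA hqA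
  obtain ⟨z, hz⟩ := (hex3 v).mp h9
  have h10 : lTensor P jA (rTensor ΩA κ z) = lTensor P jA u := by
    rw [lr_comm6 κ jA z, hz, hv]
  have h11 : rTensor ΩA κ z = u :=
    Module.Flat.lTensor_preserves_injective_linearMap (M := P) jA hjA h10
  have hπκ : (π ∘ₗ κ : Y →ₗ[R] X) = 0 := by ext t; exact hκπ.apply_apply_eq_zero t
  rw [← hu, ← h11, ← LinearMap.comp_apply, ← rTensor_comp, hπκ, rTensor_zero]
  rfl

private lemma pure_syzygy6 {A B ΩA ΩB FA FB : Type u}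
    [AddCommGroup A] [AddCommGroup B] [AddCommGroup ΩA] [AddCommGroup ΩB]
    [AddCommGroup FA] [AddCommGroup FB]
    [Module R A] [Module R B] [Module R ΩA] [Module R ΩB] [Module R FA] [Module R FB]
    [Module.Flat R FA] [Module.Flat R FB]
    (i : A →ₗ[R] B) (jA : ΩA →ₗ[R] FA) (qA : FA →ₗ[R] A) (jB : ΩB →ₗ[R] FB)
    (qB : FB →ₗ[R] B) (σ : ΩA →ₗ[R] ΩB) (τ : FA →ₗ[R] FB)
    (hjA : Function.Injective jA) (hqA : Function.Surjective qA)
    (hexA : Function.Exact jA qA) (hexB : Function.Exact jB qB)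
    (hc1 : τ ∘ₗ jA = jB ∘ₗ σ) (hc2 : i ∘ₗ qA = qB ∘ₗ τ)
    (hpure : ∀ (Z : Type u) [AddCommGroup Z] [Module R Z], Function.Injective (lTensor Z i))
    (hτ : ∀ (Z : Type u) [AddCommGroup Z] [Module R Z], Function.Injective (lTensor Z τ))
    (X : Type u) [AddCommGroup X] [Module R X] :
    Function.Injective (lTensor X σ) :=
  chase_syzygy6 i jA qA jB qB σ τ hjA hqA hexA hexB hc1 hc2 hpure hτ X
    (X →₀ R) (ker (Finsupp.linearCombination R (_root_.id : X → X)))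
    (Submodule.subtype _) (Finsupp.linearCombination R (_root_.id : X → X))
    (Submodule.injective_subtype _) (Finsupp.linearCombination_id_surjective R X)
    (LinearMap.exact_subtype_ker_map _)

private lemma flat_of_pure_sub6 {A B : Type u} [AddCommGroup A] [AddCommGroup B]
    [Module R A] [Module R B] [Module.Flat R B] (i : A →ₗ[R] B)
    (hpure : ∀ (Z : Type u) [AddCommGroup Z] [Module R Z], Function.Injective (lTensor Z i)) :
    Module.Flat R A := by
  rw [Module.Flat.iff_rTensor_injective']
  intro I
  rw [injective_iff_map_eq_zero]
  intro x hx
  have h1 : rTensor B I.subtype (lTensor I i x) = 0 := by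
    rw [← lr_comm6 I.subtype i x, hx, map_zero]
  have h2 : lTensor I i x = 0 :=
    Module.Flat.rTensor_preserves_injective_linearMap (M := B) I.subtype
      I.injective_subtype (by rw [h1, map_zero])
  exact hpure I (by rw [h2, map_zero])

private lemma flat_of_pure_quotient6 {A B C : Type u} [AddCommGroup A] [AddCommGroup B]
    [AddCommGroup C] [Module R A] [Module R B] [Module R C] [Module.Flat R B]
    (i : A →ₗ[R] B) (p : B →ₗ[R] C)
    (hp : Function.Surjective p) (hex : Function.Exact i p)
    (hpure : ∀ (Z : Type u) [AddCommGroup Z] [Module R Z], Function.Injective (lTensor Z i)) :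
    Module.Flat R C := by
  rw [Module.Flat.iff_rTensor_injective']
  intro I
  rw [injective_iff_map_eq_zero]
  intro x hx
  obtain ⟨y, hy⟩ := lTensor_surjective I (g := p) hp x
  have hb0 : lTensor R p (rTensor B I.subtype y) = 0 := by
    rw [lr_comm6 I.subtype p y, hy, hx]
  have hexRip : Function.Exact (lTensor R i) (lTensor R p) := lTensor_exact R hex hp
  obtain ⟨a, ha⟩ := (hexRip _).mp hb0
  have hmkq : rTensor B I.mkQ (rTensor B I.subtype y) = 0 := by
    rw [← LinearMap.comp_apply, ← rTensor_comp]
    have hcomp : (I.mkQ ∘ₗ I.subtype : I →ₗ[R] R ⧸ I) = 0 := by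
      ext t; simpa using (Submodule.Quotient.mk_eq_zero I).mpr t.2
    rw [hcomp, rTensor_zero]; rfl
  have h2 : lTensor (R ⧸ I) i (rTensor A I.mkQ a) = 0 := by
    rw [lr_comm6 I.mkQ i a, ha, hmkq]
  have h3 : rTensor A I.mkQ a = 0 := hpure (R ⧸ I) (by rw [h2, map_zero])
  have hexA : Function.Exact (rTensor A I.subtype) (rTensor A I.mkQ) :=
    rTensor_exact A (LinearMap.exact_subtype_mkQ I) (Submodule.mkQ_surjective I)
  obtain ⟨a', ha'⟩ := (hexA a).mp h3
  have h4 : rTensor B I.subtype (lTensor I i a') = rTensor B I.subtype y := by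
    rw [← lr_comm6 I.subtype i a', ha', ha]
  have h5 : lTensor I i a' = y :=
    Module.Flat.rTensor_preserves_injective_linearMap (M := B) I.subtype
      I.injective_subtype h4
  have hpi : p ∘ₗ i = 0 := by ext a''; exact hex.apply_apply_eq_zero a''
  rw [← hy, ← h5, ← LinearMap.comp_apply, ← lTensor_comp, hpi, lTensor_zero]
  rfl

end Stmt6Aux

section Stmt6FdLE

open LinearMap

private lemma fdle_congr6 {M N : ModuleCat.{u} R} (e : M ≃ₗ[R] N) :
    ∀ n, FdLE R n M → FdLE R n N := by
  intro n
  induction n generalizing M N with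
  | zero =>
    intro h
    letI : Module.Flat R M := h
    exact Module.Flat.of_linearEquiv e.symm
  | succ n ih =>
    rintro (h | ⟨K, F, i2, p2, ⟨hinj, hsurj, hexact⟩, hF, hK⟩)
    · exact Or.inl (ih e h)
    · refine Or.inr ⟨K, F, i2, ModuleCat.ofHom (e.toLinearMap ∘ₗ p2.hom : F →ₗ[R] N),
        ⟨hinj, e.surjective.comp hsurj, ?_⟩, hF, hK⟩
      intro b
      constructor
      · intro hb
        have hb' : e (p2.hom b) = 0 := hb
        exact (hexact b).mp ((LinearEquiv.map_eq_zero_iff e).mp hb')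
      · intro hb
        have hb' : p2.hom b = 0 := (hexact b).mpr hb
        show e (p2.hom b) = 0
        rw [hb', map_zero]

private lemma fdle_prod6 (F : Type u) [AddCommGroup F] [Module R F] [Module.Flat R F] :
    ∀ n (K : ModuleCat.{u} R), FdLE R n K → FdLE R n (ModuleCat.of R (K × F)) := by
  intro n
  induction n with
  | zero =>
    intro K h
    letI : Module.Flat R K := h
    exact flat_prod6 K F
  | succ n ih =>
    rintro K (h | ⟨K', F', i2, p2, ⟨hinj, hsurj, hexact⟩, hF', hK'⟩)
    · exact Or.inl (ih K h)
    · letI : Module.Flat R F' := hF'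
      refine Or.inr ⟨K', ModuleCat.of R (F' × F),
        ModuleCat.ofHom (LinearMap.inl R F' F ∘ₗ i2.hom : K' →ₗ[R] F' × F),
        ModuleCat.ofHom (p2.hom.prodMap (LinearMap.id : F →ₗ[R] F) : F' × F →ₗ[R] K × F),
        ⟨?_, ?_, ?_⟩, flat_prod6 F' F, hK'⟩
      · intro a b hab
        apply hinj
        simpa using congrArg Prod.fst hab
      · rintro ⟨kk, ff⟩
        obtain ⟨x, hx⟩ := hsurj kk
        refine ⟨(x, ff), ?_⟩
        show (p2.hom x, ff) = (kk, ff)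
        rw [hx]
      · rintro ⟨x, y⟩
        constructor
        · intro h0
          have h0' : (p2.hom x, y) = (0, 0) := h0
          obtain ⟨k, hk⟩ := (hexact x).mp (congrArg Prod.fst h0')
          refine ⟨k, ?_⟩
          have h2' : y = 0 := congrArg Prod.snd h0'
          show (i2.hom k, (0 : F)) = (x, y)
          rw [hk, h2']
        · rintro ⟨k, hk⟩
          have hthis : (i2.hom k, (0 : F)) = (x, y) := hk
          have h1 : x = i2.hom k := (congrArg Prod.fst hthis).symm
          have h2 : y = 0 := (congrArg Prod.snd hthis).symm
          show (p2.hom x, y) = 0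
          rw [h1, h2, hexact.apply_apply_eq_zero k]
          rfl

private lemma horseshoe6 (n : ℕ)
    (ih : ∀ {A B C : ModuleCat.{u} R} (i : A ⟶ B) (p : B ⟶ C),
      IsPureSES R i p → FdLE R n B → FdLE R n A ∧ FdLE R n C)
    {A B C : ModuleCat.{u} R} (i : A ⟶ B) (p : B ⟶ C)
    (hi : Function.Injective i) (hp : Function.Surjective p) (hex : Function.Exact i p)
    (hpure : ∀ (Z : Type u) [AddCommGroup Z] [Module R Z],
      Function.Injective (lTensor Z i.hom))
    {K FK : ModuleCat.{u} R} (k : K ⟶ FK) (q : FK ⟶ B)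
    (hk : Function.Injective k) (hq : Function.Surjective q) (hkq : Function.Exact k q)
    (hFK : Module.Flat R FK) (hK : FdLE R n K)
    (FA FC : Type u) [AddCommGroup FA] [Module R FA] [AddCommGroup FC] [Module R FC]
    [Module.Flat R FA] [Module.Flat R FC] [Module.Projective R FA] [Module.Projective R FC]
    (qA : FA →ₗ[R] A) (hqA : Function.Surjective qA)
    (qC : FC →ₗ[R] C) (hqC : Function.Surjective qC) :
    FdLE R (n + 1) A ∧ FdLE R (n + 1) C := by
  letI : Module.Flat R FK := hFK
  obtain ⟨g, hg⟩ := Module.projective_lifting_property p.hom qC hp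
  -- the horseshoe presentation of `B`
  set qB : (FA × FC) →ₗ[R] B := (i.hom ∘ₗ qA).coprod g with hqBdef
  have hgapp : ∀ fc, p.hom (g fc) = qC fc := fun fc => LinearMap.congr_fun hg fc
  have hqB : Function.Surjective qB := by
    intro b
    obtain ⟨fc, hfc⟩ := hqC (p.hom b)
    have h1 : p.hom (b - g fc) = 0 := by
      rw [map_sub, hgapp fc, hfc, sub_self]
    obtain ⟨a, ha⟩ := (hex _).mp h1
    obtain ⟨fa, hfa⟩ := hqA a
    refine ⟨(fa, fc), ?_⟩
    show i.hom (qA fa) + g fc = b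
    rw [hfa, ha]
    abel
  -- syzygies
  set ΩA := ModuleCat.of R ↥(ker qA) with hΩAdef
  set ΩB := ModuleCat.of R ↥(ker qB) with hΩBdef
  set ΩC := ModuleCat.of R ↥(ker qC) with hΩCdef
  set jA : ↥(ker qA) →ₗ[R] FA := (ker qA).subtype with hjAdef
  set jB : ↥(ker qB) →ₗ[R] (FA × FC) := (ker qB).subtype with hjBdef
  set jC : ↥(ker qC) →ₗ[R] FC := (ker qC).subtype with hjCdef
  set τ : FA →ₗ[R] (FA × FC) := LinearMap.inl R _ _ with hτdef
  have hqBτ : ∀ x, qB (τ x) = i.hom (qA x) := by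
    intro x
    show i.hom (qA x) + g 0 = i.hom (qA x)
    rw [map_zero, add_zero]
  have hσmem : ∀ w : ↥(ker qA), τ (jA w) ∈ ker qB := by
    intro w
    have hw : qA (jA w) = 0 := w.2
    rw [mem_ker, hqBτ, hw, map_zero]
  set σ : ↥(ker qA) →ₗ[R] ↥(ker qB) :=
    LinearMap.codRestrict (ker qB) (τ ∘ₗ jA) hσmem with hσdef
  have hqCB : ∀ w : FA × FC, qC w.2 = p.hom (qB w) := by
    rintro ⟨x, y⟩
    show qC y = p.hom (i.hom (qA x) + g y)
    rw [map_add, hex.apply_apply_eq_zero, hgapp, zero_add]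
  have hρmem : ∀ w : ↥(ker qB), (w : FA × FC).2 ∈ ker qC := by
    intro w
    have hw : qB w.1 = 0 := w.2
    show qC w.1.2 = 0
    rw [hqCB w.1, hw, map_zero]
  set ρ : ↥(ker qB) →ₗ[R] ↥(ker qC) :=
    LinearMap.codRestrict (ker qC) (LinearMap.snd R _ _ ∘ₗ jB) hρmem with hρdef
  -- the syzygy sequence is a SES
  have hσinj : Function.Injective σ := by
    intro w w' hww'
    have h1 := congrArg (fun t : ↥(ker qB) => ((t : FA × FC).1)) hww'
    exact Subtype.ext h1
  have hρsurj : Function.Surjective ρ := by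
    rintro ⟨y, hy⟩
    have h1 : p.hom (g y) = 0 := by rw [hgapp, mem_ker.mp hy]
    obtain ⟨a, ha⟩ := (hex _).mp h1
    obtain ⟨fa, hfa⟩ := hqA a
    have hmem : qB (-fa, y) = 0 := by
      show i.hom (qA (-fa)) + g y = 0
      rw [map_neg, map_neg, hfa, ha]
      abel
    exact ⟨⟨(-fa, y), hmem⟩, rfl⟩
  have hρexact : Function.Exact σ ρ := by
    intro w
    constructor
    · intro h0
      have h1 : (w : FA × FC).2 = 0 := congrArg Subtype.val h0
      have h2 : qB (w : FA × FC) = 0 := w.2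
      have h3 : i.hom (qA (w : FA × FC).1) = 0 := by
        have h4 : (w : FA × FC) = ((w : FA × FC).1, 0) := by
          rw [← h1]
        rw [← hqBτ]
        rw [h4] at h2
        exact h2
      have h5 : qA (w : FA × FC).1 = 0 := hi (by rw [h3, map_zero])
      refine ⟨⟨(w : FA × FC).1, h5⟩, ?_⟩
      apply Subtype.ext
      show ((w : FA × FC).1, (0 : FC)) = (w : FA × FC)
      rw [← h1]
    · rintro ⟨a, rfl⟩
      apply Subtype.ext
      show (0 : FC) = 0
      rfl
  -- purity of the syzygy sequence
  have hτpure : ∀ (Z : Type u) [AddCommGroup Z] [Module R Z],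
      Function.Injective (lTensor Z τ) := by
    intro Z _ _
    have hfst : (LinearMap.fst R FA FC) ∘ₗ τ = LinearMap.id := by
      ext x; rfl
    intro a b hab
    have h2 := congrArg (lTensor Z (LinearMap.fst R FA FC)) hab
    rw [← LinearMap.comp_apply, ← LinearMap.comp_apply, ← lTensor_comp, hfst,
      lTensor_id] at h2
    simpa using h2
  haveI : Module.Flat R (FA × FC) := flat_prod6 _ _
  have hc1 : τ ∘ₗ jA = jB ∘ₗ σ := rfl
  have hc2 : i.hom ∘ₗ qA = qB ∘ₗ τ := by
    refine LinearMap.ext fun x => ?_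
    exact (hqBτ _).symm
  have hσpure : ∀ X : ModuleCat.{u} R, Function.Injective (lTensor X (σ : ΩA →ₗ[R] ΩB)) :=
    fun X => pure_syzygy6 (A := ↥A) (B := ↥B) (ΩA := ↥(ker qA)) (ΩB := ↥(ker qB))
      (FA := FA) (FB := FA × FC) i.hom jA qA jB qB σ τ
      (Submodule.injective_subtype _) hqA
      (LinearMap.exact_subtype_ker_map qA) (LinearMap.exact_subtype_ker_map qB)
      hc1 hc2 hpure hτpure X
  -- pullback construction to compare the two presentations of `B`
  set φ : (FK × (FA × FC)) →ₗ[R] B :=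
    q.hom ∘ₗ LinearMap.fst R _ _ - qB ∘ₗ LinearMap.snd R _ _ with hφdef
  set D := ModuleCat.of R ↥(ker φ) with hDdef
  have hφapp : ∀ w : FK × (FA × FC),
      φ w = q.hom w.1 - qB w.2 := fun w => rfl
  set m2 : ↥(ker φ) →ₗ[R] FK := LinearMap.fst R _ _ ∘ₗ (ker φ).subtype with hm2def
  have hm1mem : ∀ w : ↥(ker qB), ((0 : FK), jB w) ∈ ker φ := by
    intro w
    rw [mem_ker, hφapp]
    show q.hom 0 - qB (jB w) = 0
    have hw : qB (jB w) = 0 := w.2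
    rw [map_zero, hw, sub_zero]
  set m1 : ↥(ker qB) →ₗ[R] ↥(ker φ) :=
    LinearMap.codRestrict (ker φ) ((LinearMap.inr R FK _) ∘ₗ jB) hm1mem with hm1def
  have hm1inj : Function.Injective m1 := by
    intro w w' hww'
    have h1 := congrArg (fun t : ↥(ker φ) => ((t : FK × (FA × FC)).2)) hww'
    exact Subtype.ext h1
  have hm2surj : Function.Surjective m2 := by
    intro f
    obtain ⟨s2, hs2⟩ := hqB (q.hom f)
    refine ⟨⟨(f, s2), ?_⟩, rfl⟩
    rw [mem_ker, hφapp, hs2, sub_self]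
  have hm2exact : Function.Exact m1 m2 := by
    intro w
    constructor
    · intro h0
      have h1 : (w : FK × (FA × FC)).1 = 0 := h0
      have h2 : qB (w : FK × (FA × FC)).2 = 0 := by
        have h3 := mem_ker.mp w.2
        rw [hφapp, h1, map_zero, zero_sub, neg_eq_zero] at h3
        exact h3
      refine ⟨⟨(w : FK × (FA × FC)).2, h2⟩, ?_⟩
      apply Subtype.ext
      show ((0 : FK), (w : FK × (FA × FC)).2) = (w : FK × (FA × FC))
      rw [← h1]
    · rintro ⟨a, rfl⟩
      rfl
  have hm1pure : ∀ X : ModuleCat.{u} R,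
      Function.Injective (lTensor X (m1 : ΩB →ₗ[R] D)) := by
    intro X
    exact pure_of_flat_quotient6 m1 m2 hm1inj hm2surj hm2exact X
  -- `D` is equivalent to `K × (FA × FC)`
  obtain ⟨s, hs⟩ := Module.projective_lifting_property q.hom qB hq
  have hsapp : ∀ w, q.hom (s w) = qB w := fun w => LinearMap.congr_fun hs w
  have hefmem : ∀ w : ↥K × (FA × FC),
      (k.hom w.1 + s w.2, w.2) ∈ ker φ := by
    intro w
    rw [mem_ker, hφapp, map_add, hkq.apply_apply_eq_zero, zero_add, hsapp, sub_self]
  set ef : (↥K × (FA × FC)) →ₗ[R] ↥(ker φ) :=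
    LinearMap.codRestrict (ker φ)
      (((k.hom ∘ₗ LinearMap.fst R _ _) + (s ∘ₗ LinearMap.snd R _ _)).prod
        (LinearMap.snd R _ _)) hefmem with hefdef
  have hefinj : Function.Injective ef := by
    rintro ⟨k1, s1⟩ ⟨k2, s2⟩ h12
    have h1 := congrArg (fun t : ↥(ker φ) => (t : FK × (FA × FC))) h12
    have h2 : (k.hom k1 + s s1, s1) = (k.hom k2 + s s2, s2) := h1
    have h3 : s1 = s2 := congrArg Prod.snd h2
    have h4 : k.hom k1 = k.hom k2 := by
      have h5 := congrArg Prod.fst h2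
      rw [h3] at h5
      exact add_right_cancel h5
    rw [hk h4, h3]
  have hefsurj : Function.Surjective ef := by
    rintro ⟨⟨f, ss⟩, hfss⟩
    have h1 : q.hom (f - s ss) = 0 := by
      rw [mem_ker, hφapp] at hfss
      rw [map_sub, hsapp]
      exact sub_eq_zero.mpr (sub_eq_zero.mp hfss)
    obtain ⟨kk, hkk⟩ := (hkq _).mp h1
    refine ⟨(kk, ss), ?_⟩
    apply Subtype.ext
    show (k.hom kk + s ss, ss) = (f, ss)
    rw [hkk]
    simp
  set e : (↥K × (FA × FC)) ≃ₗ[R] ↥(ker φ) :=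
    LinearEquiv.ofBijective ef ⟨hefinj, hefsurj⟩ with hedef
  have hDfd : FdLE R n D := by
    refine fdle_congr6 R (M := ModuleCat.of R (↥K × (FA × FC))) (N := D) e n ?_
    exact fdle_prod6 R (FA × FC) n K hK
  -- apply the induction hypothesis twice
  have hstep1 := ih (A := ΩB) (B := D) (C := FK) (ModuleCat.ofHom m1) (ModuleCat.ofHom m2)
    ⟨⟨hm1inj, hm2surj, hm2exact⟩, hm1pure⟩ hDfd
  have hΩB : FdLE R n ΩB := hstep1.1
  have hstep2 := ih (A := ΩA) (B := ΩB) (C := ΩC) (ModuleCat.ofHom σ) (ModuleCat.ofHom ρ)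
    ⟨⟨hσinj, hρsurj, hρexact⟩, hσpure⟩ hΩB
  refine ⟨Or.inr ⟨ΩA, ModuleCat.of R FA, ModuleCat.ofHom jA, ModuleCat.ofHom qA,
      ⟨Submodule.injective_subtype _, hqA, LinearMap.exact_subtype_ker_map qA⟩,
      inferInstanceAs (Module.Flat R FA), hstep2.1⟩,
    Or.inr ⟨ΩC, ModuleCat.of R FC, ModuleCat.ofHom jC, ModuleCat.ofHom qC,
      ⟨Submodule.injective_subtype _, hqC, LinearMap.exact_subtype_ker_map qC⟩,
      inferInstanceAs (Module.Flat R FC), hstep2.2⟩⟩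

private lemma fdle_main6 :
    ∀ (n : ℕ) {A B C : ModuleCat.{u} R} (i : A ⟶ B) (p : B ⟶ C),
      IsPureSES R i p → FdLE R n B → FdLE R n A ∧ FdLE R n C := by
  intro n
  induction n with
  | zero =>
    intro A B C i p h hB
    obtain ⟨⟨hi, hp, hex⟩, hpure0⟩ := h
    have hpure : ∀ (Z : Type u) [AddCommGroup Z] [Module R Z],
        Function.Injective (lTensor Z i.hom) := fun Z _ _ =>
      hpure0 (ModuleCat.of R Z)
    letI : Module.Flat R B := hB
    exact ⟨flat_of_pure_sub6 i.hom hpure, flat_of_pure_quotient6 i.hom p.hom hp hex hpure⟩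
  | succ n ih =>
    intro A B C i p hpse hB
    obtain ⟨⟨hi, hp, hex⟩, hpure0⟩ := hpse
    have hpure : ∀ (Z : Type u) [AddCommGroup Z] [Module R Z],
        Function.Injective (lTensor Z i.hom) := fun Z _ _ =>
      hpure0 (ModuleCat.of R Z)
    rcases hB with hB | ⟨K, FK, k, q, ⟨hk, hq, hkq⟩, hFK, hK⟩
    · obtain ⟨h1, h2⟩ := ih i p ⟨⟨hi, hp, hex⟩, hpure0⟩ hB
      exact ⟨Or.inl h1, Or.inl h2⟩
    · exact horseshoe6 R n (fun {A B C} i p hh hB => ih i p hh hB) i p hi hp hex hpure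
        k q hk hq hkq hFK hK (A →₀ R) (C →₀ R)
        (Finsupp.linearCombination R _root_.id)
        (Finsupp.linearCombination_id_surjective R A)
        (Finsupp.linearCombination R _root_.id)
        (Finsupp.linearCombination_id_surjective R C)

end Stmt6FdLE

/-- the class of modules of flat dimension at most `n` is closed under
pure submodules and pure quotients. -/
theorem stmt6 (n : ℕ) {A B C : ModuleCat.{u} R} (i : A ⟶ B) (p : B ⟶ C)
    (h : IsPureSES R i p) (hB : FdLE R n B) :
    FdLE R n A ∧ FdLE R n C := fdle_main6 R n i p h hB

end GorensteinPaper
end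

section
/- If every injective left R-module has projective dimension at most n and every injective right R-module has flat dimension at most n, then every left R-module has PGF dimension at most n. -/
universe u

open CategoryTheory TensorProduct

namespace GorensteinPaper

variable (R : Type u) [CommRing R]

/-- `K` is an `n`-th syzygy of `M`. -/
def NthSyzOf : ℕ → ModuleCat.{u} R → ModuleCat.{u} R → Prop
  | 0, K, M => Nonempty (K ≃ₗ[R] M)
  | n + 1, K, M => ∃ (M₁ F : ModuleCat.{u} R) (i : M₁ ⟶ F) (p : F ⟶ M),
      IsSES R i p ∧ Module.Projective R F ∧ NthSyzOf n K M₁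

def IsSyz (n : ℕ) (K : ModuleCat.{u} R) : Prop := ∃ M, NthSyzOf R n K M

variable {R}

lemma resDimLE_mono {C : ModuleCat.{u} R → Prop} :
    ∀ {m n : ℕ}, m ≤ n → ∀ {X : ModuleCat.{u} R}, ResDimLE R C m X → ResDimLE R C n X := by
  intro m n
  induction n with
  | zero => intro h X hX; simpa [Nat.le_zero.mp h] using hX
  | succ n ih =>
    intro h X hX
    rcases Nat.lt_or_ge m (n+1) with h' | h'
    · exact Or.inl (ih (Nat.lt_succ_iff.mp h') hX)
    · have : m = n + 1 := le_antisymm h h'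
      subst this; exact hX

lemma resDimLE_peel {C : ModuleCat.{u} R → Prop} (hC0 : C (ModuleCat.of R PUnit)) :
    ∀ {n : ℕ} {X : ModuleCat.{u} R}, ResDimLE R C n X →
      ∃ (K F : ModuleCat.{u} R) (i : K ⟶ F) (p : F ⟶ X),
        IsSES R i p ∧ C F ∧ ResDimLE R C (n - 1) K := by
  intro n
  induction n with
  | zero =>
    intro X hX
    refine ⟨ModuleCat.of R PUnit, X, ModuleCat.ofHom (0 : _ →ₗ[R] _), ModuleCat.ofHom LinearMap.id, ⟨?_, ?_, ?_⟩, hX, hC0⟩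
    · intro a b _; exact Subsingleton.elim a b
    · exact fun x => ⟨x, rfl⟩
    · rw [LinearMap.exact_iff]
      refine Eq.trans ?_ (LinearMap.range_zero (M₂ := X)).symm
      exact LinearMap.ker_id
  | succ n ih =>
    intro X hX
    rcases hX with h | ⟨K, F, i, p, hs, hF, hK⟩
    · obtain ⟨K, F, i, p, hs, hF, hK⟩ := ih h
      exact ⟨K, F, i, p, hs, hF, resDimLE_mono (Nat.sub_le _ _) hK⟩
    · exact ⟨K, F, i, p, hs, hF, by simpa using hK⟩

lemma pd_prod_proj {n : ℕ} {A : ModuleCat.{u} R} (hA : PdLE R n A)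
    (B : ModuleCat.{u} R) (hB : Module.Projective R B) :
    PdLE R n (ModuleCat.of R (A × B)) := by
  induction n generalizing A with
  | zero =>
    haveI : Module.Projective R A := hA
    haveI := hB
    show Module.Projective R (A × B)
    infer_instance
  | succ n ih =>
    rcases hA with h | ⟨K, F, i, p, hs, hF, hK⟩
    · exact Or.inl (ih h)
    · refine Or.inr ⟨K, ModuleCat.of R (F × B), ModuleCat.ofHom (LinearMap.prod i.hom 0),
        ModuleCat.ofHom (LinearMap.prodMap p.hom LinearMap.id), ⟨?_, ?_, ?_⟩, ?_, hK⟩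
      · intro a b h
        exact hs.1 (congrArg Prod.fst h)
      · rintro ⟨x, b⟩
        obtain ⟨y, hy⟩ := hs.2.1 x
        refine ⟨(y, b), ?_⟩
        show (p y, b) = (x, b)
        rw [hy]
      · obtain ⟨hi, hp, hex⟩ := hs
        rw [LinearMap.exact_iff] at hex ⊢
        ext ⟨x, b⟩
        constructor
        · intro hxb
          have h1 : p x = 0 ∧ b = 0 := by
            have := Prod.ext_iff.mp (show ((p x : A), (b : B)) = (0, 0) from hxb)
            exact ⟨this.1, this.2⟩
          have hx : x ∈ LinearMap.range i.hom := by rw [← hex]; exact h1.1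
          obtain ⟨k, hk⟩ := hx
          refine ⟨k, ?_⟩
          show (i k, (0 : B)) = (x, b)
          rw [hk, h1.2]
        · rintro ⟨k, hk⟩
          have h1 : (i k, (0 : B)) = (x, b) := hk
          have hx : x = i k := (Prod.ext_iff.mp h1).1.symm
          have hb : b = 0 := (Prod.ext_iff.mp h1).2.symm
          show ((p x : A), b) = (0, 0)
          rw [hx, hb]
          have : p (i k) = 0 := by
            have : i k ∈ LinearMap.ker p.hom := by rw [hex]; exact ⟨k, rfl⟩
            exact this
          rw [this]
      · haveI := hF; haveI := hB
        show Module.Projective R (F × B)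
        infer_instance

lemma nthSyzOf_succ_of_ses {n : ℕ} {K K₁ P M : ModuleCat.{u} R}
    (i : K₁ ⟶ P) (g : P ⟶ K) (hses : IsSES R i g) (hP : Module.Projective R P)
    (h : NthSyzOf R n K M) : NthSyzOf R (n + 1) K₁ M := by
  induction n generalizing M with
  | zero =>
    obtain ⟨e⟩ := h
    refine ⟨K₁, P, i, ModuleCat.ofHom ((e : K →ₗ[R] M) ∘ₗ g.hom), ⟨hses.1, ?_, ?_⟩, hP, ⟨LinearEquiv.refl R K₁⟩⟩
    · exact e.surjective.comp hses.2.1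
    · obtain ⟨hi, hg, hex⟩ := hses
      rw [LinearMap.exact_iff] at hex ⊢
      change LinearMap.ker ((e : K →ₗ[R] M) ∘ₗ g.hom) = LinearMap.range i.hom
      rw [LinearMap.ker_comp, ← hex]
      have : LinearMap.ker (e : K →ₗ[R] M) = ⊥ := LinearMap.ker_eq_bot.mpr e.injective
      rw [this]
      rfl
  | succ n ih =>
    obtain ⟨M₁, F, i', p', hs, hF, h'⟩ := h
    exact ⟨M₁, F, i', p', hs, hF, ih h'⟩

lemma isSyz_of_succ {n : ℕ} {K M : ModuleCat.{u} R} (h : NthSyzOf R (n + 1) K M) :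
    IsSyz R n K := by
  obtain ⟨M₁, _, _, _, _, _, h⟩ := h
  exact ⟨M₁, h⟩

lemma nthSyzOf_unfold_top {n : ℕ} {K M : ModuleCat.{u} R} (h : NthSyzOf R (n + 1) K M) :
    ∃ (F J : ModuleCat.{u} R) (i : K ⟶ F) (p : F ⟶ J),
      IsSES R i p ∧ Module.Projective R F ∧ NthSyzOf R n J M := by
  induction n generalizing M with
  | zero =>
    obtain ⟨M₁, F, i, p, hs, hF, ⟨e⟩⟩ := h
    refine ⟨F, M, ModuleCat.ofHom (i.hom ∘ₗ (e : K →ₗ[R] M₁)), p, ⟨?_, hs.2.1, ?_⟩, hF,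
      ⟨LinearEquiv.refl R M⟩⟩
    · exact hs.1.comp e.injective
    · obtain ⟨hi, hp, hex⟩ := hs
      rw [LinearMap.exact_iff] at hex ⊢
      change LinearMap.ker p.hom = LinearMap.range (i.hom ∘ₗ (e : K →ₗ[R] M₁))
      rw [hex, LinearMap.range_comp_of_range_eq_top _ (LinearMap.range_eq_top.mpr e.surjective)]
  | succ n ih =>
    obtain ⟨M₁, F₀, i₀, p₀, hs₀, hF₀, h'⟩ := h
    obtain ⟨F, J, i, p, hs, hF, hJ⟩ := ih h'
    exact ⟨F, J, i, p, hs, hF, ⟨M₁, F₀, i₀, p₀, hs₀, hF₀, hJ⟩⟩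

lemma exists_syz (n : ℕ) (M : ModuleCat.{u} R) : ∃ K, NthSyzOf R n K M := by
  induction n generalizing M with
  | zero => exact ⟨M, ⟨LinearEquiv.refl R M⟩⟩
  | succ n ih =>
    classical
    set F : ModuleCat.{u} R := ModuleCat.of R (M →₀ R) with hF
    let π : F →ₗ[R] M := Finsupp.linearCombination R _root_.id
    have hπ : Function.Surjective π := fun m =>
      ⟨Finsupp.single m 1, by
        show Finsupp.linearCombination R _root_.id (Finsupp.single m 1) = m
        rw [Finsupp.linearCombination_single, one_smul]; rfl⟩
    set M₁ : ModuleCat.{u} R := ModuleCat.of R (LinearMap.ker π) with hM₁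
    obtain ⟨K, hK⟩ := ih M₁
    refine ⟨K, M₁, F, ModuleCat.ofHom (LinearMap.ker π).subtype, ModuleCat.ofHom π, ⟨Subtype.coe_injective, hπ, ?_⟩, ?_, hK⟩
    · rw [LinearMap.exact_iff]; exact (Submodule.range_subtype _).symm
    · show Module.Projective R (M →₀ R); infer_instance

section Tensor

/-- Splicing exactness through surjective/injective ends. -/
lemma splice_exact {P2 Z2 P1 Z1 P0 : Type u}
    [AddCommGroup P2] [AddCommGroup Z2] [AddCommGroup P1] [AddCommGroup Z1] [AddCommGroup P0]
    [Module R P2] [Module R Z2] [Module R P1] [Module R Z1] [Module R P0]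
    (g2 : P2 →ₗ[R] Z2) (f1 : Z2 →ₗ[R] P1) (g1 : P1 →ₗ[R] Z1) (f0 : Z1 →ₗ[R] P0)
    (hg2 : Function.Surjective g2) (hex : Function.Exact f1 g1) (hf0 : Function.Injective f0) :
    Function.Exact (f1 ∘ₗ g2) (f0 ∘ₗ g1) := by
  intro y
  constructor
  · intro h
    have h1 : g1 y = 0 := by
      apply hf0
      simpa using h
    obtain ⟨z, hz⟩ := (hex y).mp h1
    obtain ⟨x, hx⟩ := hg2 z
    exact ⟨x, by simp [LinearMap.comp_apply, hx, hz]⟩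
  · rintro ⟨x, rfl⟩
    have : g1 (f1 (g2 x)) = 0 := hex.apply_apply_eq_zero (g2 x)
    simp [LinearMap.comp_apply, this]

variable (R) in
/-- `Tor₁(E, B) = 0`, expressed concretely. -/
def Tor1Z (E B : ModuleCat.{u} R) : Prop :=
  ∀ (A F : ModuleCat.{u} R) (i : A →ₗ[R] F) (p : F →ₗ[R] B),
    Function.Injective i → Function.Surjective p → Function.Exact i p →
    Module.Flat R F → Function.Injective (LinearMap.lTensor E i)

/-- Balancing of Tor: one direction of the comparison of the two flat "resolutions". -/
lemma balance_aux {A F B C G E : ModuleCat.{u} R}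
    (iA : A →ₗ[R] F) (pB : F →ₗ[R] B) (iC : C →ₗ[R] G) (pE : G →ₗ[R] E)
    (hiA : Function.Injective iA) (hpB : Function.Surjective pB) (hex1 : Function.Exact iA pB)
    (hF : Module.Flat R F)
    (hiC : Function.Injective iC) (hpE : Function.Surjective pE) (hex2 : Function.Exact iC pE)
    (hG : Module.Flat R G)
    (h : Function.Injective (LinearMap.rTensor B iC)) :
    Function.Injective (LinearMap.lTensor E iA) := by
  haveI := hF; haveI := hG
  rw [injective_iff_map_eq_zero]
  intro x hx
  -- lift x along G⊗A → E⊗A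
  obtain ⟨g, hg⟩ := LinearMap.rTensor_surjective A hpE x
  set gF : (G ⊗[R] F : Type u) := LinearMap.lTensor G iA g with hgF
  have hgF0 : LinearMap.rTensor F pE gF = 0 := by
    have hsq : LinearMap.rTensor F pE (LinearMap.lTensor G iA g)
        = LinearMap.lTensor E iA (LinearMap.rTensor A pE g) := by
      rw [← LinearMap.comp_apply, ← LinearMap.comp_apply,
        LinearMap.rTensor_comp_lTensor, LinearMap.lTensor_comp_rTensor]
    rw [hgF, hsq, hg, hx]
  -- gF comes from C ⊗ F
  obtain ⟨c, hc⟩ := ((rTensor_exact (M := C) (N := G) (P := E) F hex2 hpE) gF).mp hgF0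
  -- push c to C ⊗ B : it dies in G ⊗ B
  have hcB : LinearMap.rTensor B iC (LinearMap.lTensor C pB c) = 0 := by
    have hsq : LinearMap.rTensor B iC (LinearMap.lTensor C pB c)
        = LinearMap.lTensor G pB (LinearMap.rTensor F iC c) := by
      rw [← LinearMap.comp_apply, ← LinearMap.comp_apply,
        LinearMap.rTensor_comp_lTensor, LinearMap.lTensor_comp_rTensor]
    rw [hsq, hc, hgF]
    rw [← LinearMap.comp_apply, ← LinearMap.lTensor_comp]
    have : pB ∘ₗ iA = 0 := hex1.linearMap_comp_eq_zero
    rw [this, LinearMap.lTensor_zero, LinearMap.zero_apply]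
  have hcB0 : LinearMap.lTensor C pB c = 0 := h (by simpa using hcB)
  -- so c comes from C ⊗ A
  obtain ⟨a, ha⟩ := ((lTensor_exact (M := A) (N := F) (P := B) C hex1 hpB) c).mp hcB0
  -- identify g with the image of a
  have hga : LinearMap.rTensor A iC a = g := by
    apply Module.Flat.lTensor_preserves_injective_linearMap (M := G) iA hiA
    have hsq : LinearMap.lTensor G iA (LinearMap.rTensor A iC a)
        = LinearMap.rTensor F iC (LinearMap.lTensor C iA a) := by
      rw [← LinearMap.comp_apply, ← LinearMap.comp_apply,
        LinearMap.lTensor_comp_rTensor, LinearMap.rTensor_comp_lTensor]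
    rw [hsq, ha, hc, hgF]
  -- conclude x = 0
  rw [← hg, ← hga, ← LinearMap.comp_apply, ← LinearMap.rTensor_comp]
  have : pE ∘ₗ iC = 0 := hex2.linearMap_comp_eq_zero
  rw [this, LinearMap.rTensor_zero, LinearMap.zero_apply]

/-- Dimension shifting: modules of finite flat dimension `n` have no `Tor₁` against
`n`-th syzygies. -/
lemma tor_vanish : ∀ (n : ℕ) (E B : ModuleCat.{u} R),
    FdLE R n E → IsSyz R n B → Tor1Z R E B := by
  intro n
  induction n with
  | zero =>
    intro E B hE _ A F i p hi hp hex hF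
    haveI : Module.Flat R E := hE
    exact Module.Flat.lTensor_preserves_injective_linearMap i hi
  | succ n ih =>
    intro E B hE hB A F i p hi hp hex hF
    have hfp : Module.Flat R ↥(ModuleCat.of R PUnit.{u+1}) :=
      inferInstanceAs (Module.Flat R PUnit.{u+1})
    obtain ⟨E', G, iE, pE, hsE, hG, hE'⟩ :=
      resDimLE_peel (C := fun N => Module.Flat R N) hfp hE
    have hE'n : FdLE R n E' := by simpa [FdLE] using hE'
    obtain ⟨M, hBM⟩ := hB
    obtain ⟨F', J, j, q, hs', hF', hJ⟩ := nthSyzOf_unfold_top hBM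
    haveI := hF'
    haveI : Module.Flat R F' := inferInstance
    haveI := hG
    -- it suffices to show that E' ⊗ B → G ⊗ B is injective
    apply balance_aux i p iE.hom pE.hom hi hp hex hF hsE.1 hsE.2.1 hsE.2.2 hG
    rw [injective_iff_map_eq_zero]
    intro x hx
    have hx' : LinearMap.lTensor E' j.hom x = 0 := by
      apply Module.Flat.rTensor_preserves_injective_linearMap (M := F') iE.hom hsE.1
      have hsq : LinearMap.rTensor F' iE.hom (LinearMap.lTensor E' j.hom x)
          = LinearMap.lTensor G j.hom (LinearMap.rTensor B iE.hom x) := by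
        rw [← LinearMap.comp_apply, ← LinearMap.comp_apply,
          LinearMap.rTensor_comp_lTensor, LinearMap.lTensor_comp_rTensor]
      rw [hsq, hx]
      simp
    have hinj : Function.Injective (LinearMap.lTensor E' j.hom) :=
      ih E' J hE'n ⟨M, hJ⟩ B F' j.hom q.hom hs'.1 hs'.2.1 hs'.2.2 inferInstance
    exact hinj (by simpa using hx')

end Tensor

section Cone

lemma punit_projective : Module.Projective R ↥(ModuleCat.of R PUnit.{u+1}) :=
  inferInstanceAs (Module.Projective R PUnit.{u+1})

/-- The mapping cone step: if `K` is an `n`-th syzygy of `M`, and `M` embeds into a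
module `E` of projective dimension at most `n`, then `K` embeds into a projective module
with cokernel an `n`-th syzygy of `E / M`. -/
lemma coneStep : ∀ (n : ℕ) (M E : ModuleCat.{u} R) (u : M →ₗ[R] E), Function.Injective u →
    PdLE R n E → ∀ K : ModuleCat.{u} R, NthSyzOf R n K M →
    ∃ (P K' : ModuleCat.{u} R) (f : K ⟶ P) (g : P ⟶ K'),
      Module.Projective R P ∧ IsSES R f g ∧
      NthSyzOf R n K' (ModuleCat.of R (E ⧸ LinearMap.range u)) := by
  intro n
  induction n with
  | zero =>
    intro M E u hu hE K hK
    obtain ⟨e⟩ := hK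
    refine ⟨E, ModuleCat.of R (E ⧸ LinearMap.range u), ModuleCat.ofHom (u ∘ₗ (e : K →ₗ[R] M)),
      ModuleCat.ofHom (LinearMap.range u).mkQ, hE, ⟨hu.comp e.injective, Submodule.mkQ_surjective _, ?_⟩,
      ⟨LinearEquiv.refl R _⟩⟩
    change Function.Exact (u ∘ₗ (e : K →ₗ[R] M)) (LinearMap.range u).mkQ
    rw [LinearMap.exact_iff, Submodule.ker_mkQ,
      LinearMap.range_comp_of_range_eq_top u (LinearEquiv.range e)]
  | succ n ih =>
    intro M E u hu hE K hK
    obtain ⟨M₁, F, iM, pF, hsM, hF, hK1⟩ := hK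
    obtain ⟨E₁, Q, iE, pQ, hsE, hQ, hE1'⟩ :=
      resDimLE_peel (C := fun N => Module.Projective R N) (punit_projective (R := R)) hE
    have hE1 : PdLE R n E₁ := by simpa [PdLE] using hE1'
    haveI := hF
    obtain ⟨ℓ, hℓ⟩ := Module.projective_lifting_property pQ.hom (u ∘ₗ pF.hom) hsE.2.1
    have hkerQ : LinearMap.ker pQ.hom = LinearMap.range iE.hom := LinearMap.exact_iff.mp hsE.2.2
    have hkerF : LinearMap.ker pF.hom = LinearMap.range iM.hom := LinearMap.exact_iff.mp hsM.2.2
    set w : M₁ →ₗ[R] Q := -(ℓ ∘ₗ iM.hom) with hw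
    have hwm : ∀ m : M₁, w m = -(ℓ (iM m)) := fun m => rfl
    have hmem : ∀ m : M₁, w m ∈ LinearMap.range iE.hom := by
      intro m
      rw [← hkerQ, LinearMap.mem_ker]
      have h1 : pQ (ℓ (iM m)) = u (pF (iM m)) := LinearMap.congr_fun hℓ (iM m)
      have h2 : pF (iM m) = 0 := hsM.2.2.apply_apply_eq_zero m
      rw [hwm, map_neg, h1, h2, map_zero, neg_zero]
    set eIso := LinearEquiv.ofInjective iE.hom hsE.1 with heIso
    set v : M₁ →ₗ[R] E₁ :=
      (eIso.symm : LinearMap.range iE.hom →ₗ[R] E₁) ∘ₗ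
        LinearMap.codRestrict (LinearMap.range iE.hom) w hmem with hv
    have hiv : ∀ m : M₁, iE (v m) = w m := by
      intro m
      have hvm : v m = eIso.symm (LinearMap.codRestrict (LinearMap.range iE.hom) w hmem m) := rfl
      rw [hvm, heIso, LinearEquiv.ofInjective_symm_apply]
      rfl
    set v' : M₁ →ₗ[R] ↥(ModuleCat.of R (↥E₁ × ↥F)) :=
      LinearMap.prod v iM.hom with hv'
    have hv'inj : Function.Injective v' := fun a b h => hsM.1 (congrArg Prod.snd h)
    have hpd : PdLE R n (ModuleCat.of R (↥E₁ × ↥F)) := pd_prod_proj hE1 F hF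
    obtain ⟨P, K', f, g, hP, hses, hsyz⟩ :=
      ih M₁ (ModuleCat.of R (↥E₁ × ↥F)) v' hv'inj hpd K hK1
    refine ⟨P, K', f, g, hP, hses, ?_⟩
    -- upgrade the syzygy witness by one step
    set φ : ↥(ModuleCat.of R (↥E₁ × ↥F)) →ₗ[R] Q :=
      (iE.hom ∘ₗ LinearMap.fst R ↥E₁ ↥F) + (ℓ ∘ₗ LinearMap.snd R ↥E₁ ↥F) with hφ
    have hφ_apply : ∀ (ex : E₁) (x : F), φ (ex, x) = iE ex + ℓ x := fun ex x => rfl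
    have hkerφ : LinearMap.ker φ = LinearMap.range v' := by
      ext q
      obtain ⟨ex, x⟩ := q
      constructor
      · intro h0
        have h0' : iE ex + ℓ x = 0 := h0
        have h1 : u (pF x) = 0 := by
          have h2 : pQ (iE ex + ℓ x) = 0 := by rw [h0', map_zero]
          have h3 : pQ (iE ex) = 0 := by
            have hm : iE ex ∈ LinearMap.ker pQ.hom := by rw [hkerQ]; exact ⟨ex, rfl⟩
            exact hm
          have h4 : pQ (ℓ x) = u (pF x) := LinearMap.congr_fun hℓ x
          rw [map_add, h3, zero_add, h4] at h2
          exact h2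
        have h5 : pF x = 0 := hu (by rw [h1, map_zero])
        obtain ⟨m, hm⟩ : x ∈ LinearMap.range iM.hom := by rw [← hkerF]; exact h5
        have h7 : iE ex = iE (v m) := by
          rw [hiv m, hwm, hm]
          exact eq_neg_of_add_eq_zero_left h0'
        refine ⟨m, ?_⟩
        show (v m, iM m) = (ex, x)
        rw [hm, hsE.1 h7.symm]
      · rintro ⟨m, hm⟩
        have hm' : (v m, iM m) = (ex, x) := hm
        rw [LinearMap.mem_ker, ← hm', hφ_apply, hiv m, hwm, neg_add_cancel]
    set Cmod := ModuleCat.of R (↥(ModuleCat.of R (↥E₁ × ↥F)) ⧸ LinearMap.range v') with hCmod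
    set φ' : ↥Cmod →ₗ[R] ↥Q := (LinearMap.range v').liftQ φ (le_of_eq hkerφ.symm) with hφ'
    have hφ'inj : Function.Injective φ' := by
      rw [← LinearMap.ker_eq_bot]
      exact Submodule.ker_liftQ_eq_bot _ _ _ (le_of_eq hkerφ)
    set π' : ↥Q →ₗ[R] ↥(ModuleCat.of R (↥E ⧸ LinearMap.range u)) :=
      (LinearMap.range u).mkQ ∘ₗ pQ.hom with hπ'
    have hπ'surj : Function.Surjective π' := (Submodule.mkQ_surjective _).comp hsE.2.1
    have hexπ : LinearMap.ker π' = LinearMap.range φ' := by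
      rw [hπ', LinearMap.ker_comp, Submodule.ker_mkQ, hφ', Submodule.range_liftQ]
      ext q
      constructor
      · intro hq
        obtain ⟨m, hm⟩ := hq
        obtain ⟨x, hx⟩ := hsM.2.1 m
        have h1 : pQ (q - ℓ x) = 0 := by
          have h2 : pQ (ℓ x) = u (pF x) := LinearMap.congr_fun hℓ x
          rw [map_sub, h2, hx, hm, sub_self]
        obtain ⟨ex, hex⟩ : q - ℓ x ∈ LinearMap.range iE.hom := by rw [← hkerQ]; exact h1
        refine ⟨(ex, x), ?_⟩
        rw [hφ_apply, hex]
        abel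
      · rintro ⟨⟨ex, x⟩, rfl⟩
        rw [hφ_apply]
        show pQ (iE ex + ℓ x) ∈ LinearMap.range u
        have h3 : pQ (iE ex) = 0 := by
          have hm : iE ex ∈ LinearMap.ker pQ.hom := by rw [hkerQ]; exact ⟨ex, rfl⟩
          exact hm
        have h4 : pQ (ℓ x) = u (pF x) := LinearMap.congr_fun hℓ x
        rw [map_add, h3, zero_add, h4]
        exact ⟨pF x, rfl⟩
    exact ⟨Cmod, Q, ModuleCat.ofHom φ', ModuleCat.ofHom π', ⟨hφ'inj, hπ'surj, LinearMap.exact_iff.mpr hexπ⟩, hQ, hsyz⟩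

end Cone

section ProjPGF

lemma exact_zero_id {A B : Type u} [AddCommGroup A] [AddCommGroup B] [Module R A] [Module R B] :
    Function.Exact (0 : A →ₗ[R] B) (LinearMap.id : B →ₗ[R] B) := by
  intro y
  constructor
  · intro hy
    exact ⟨0, by simpa using hy.symm⟩
  · rintro ⟨x, hx⟩
    simpa using hx.symm

lemma exact_id_zero {A B : Type u} [AddCommGroup A] [AddCommGroup B] [Module R A] [Module R B] :
    Function.Exact (LinearMap.id : A →ₗ[R] A) (0 : A →ₗ[R] B) := by
  intro y
  constructor
  · intro _
    exact ⟨y, rfl⟩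
  · rintro ⟨x, -⟩
    rfl

lemma isPGF_of_projective (P : ModuleCat.{u} R) (hP : Module.Projective R P) : IsPGF R P := by
  classical
  refine ⟨fun _ => P, fun i => if Even i then ModuleCat.ofHom (LinearMap.id : P →ₗ[R] P) else ModuleCat.ofHom 0,
    fun _ => hP, ?_, ?_, ?_⟩
  · intro i
    beta_reduce
    by_cases h : Even i
    · rw [if_pos h, if_neg (by simpa [Int.even_add_one] using h)]
      exact exact_zero_id
    · rw [if_neg h, if_pos (Int.even_add_one.mpr h)]
      exact exact_id_zero
  · intro E _ i
    beta_reduce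
    by_cases h : Even i
    · rw [if_pos h, if_neg (by simpa [Int.even_add_one] using h),
        ModuleCat.hom_ofHom, ModuleCat.hom_ofHom, LinearMap.lTensor_id, LinearMap.lTensor_zero]
      exact exact_zero_id
    · rw [if_neg h, if_pos (Int.even_add_one.mpr h),
        ModuleCat.hom_ofHom, ModuleCat.hom_ofHom, LinearMap.lTensor_id, LinearMap.lTensor_zero]
      exact exact_id_zero
  · beta_reduce
    rw [if_pos Even.zero, ModuleCat.hom_ofHom, LinearMap.range_id]
    exact ⟨Submodule.topEquiv.symm⟩

lemma pgf_of_syz {n : ℕ} {K M : ModuleCat.{u} R} (h : NthSyzOf R n K M)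
    (hK : IsPGF R K) : PGFdLE R n M := by
  induction n generalizing M with
  | zero =>
    obtain ⟨e⟩ := h
    obtain ⟨P, d, h1, h2, h3, ⟨e0⟩⟩ := hK
    exact ⟨P, d, h1, h2, h3, ⟨e.symm.trans e0⟩⟩
  | succ n ih =>
    obtain ⟨M₁, F, i, p, hs, hF, h'⟩ := h
    exact Or.inr ⟨M₁, F, i, p, hs, isPGF_of_projective F hF, ih h'⟩

end ProjPGF

section Assembly

lemma isPGF_of_chain (K : ModuleCat.{u} R)
    (Z P : ℤ → ModuleCat.{u} R)
    (f : ∀ k : ℤ, Z (k+1) →ₗ[R] P k) (g : ∀ k : ℤ, P k →ₗ[R] Z k)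
    (hproj : ∀ k, Module.Projective R (P k))
    (hses : ∀ k, Function.Injective (f k) ∧ Function.Surjective (g k) ∧
      Function.Exact (f k) (g k))
    (htor : ∀ (E : ModuleCat.{u} R), Module.Injective R E →
      ∀ k, Function.Injective (LinearMap.lTensor E (f k)))
    (hKZ : Nonempty (K ≃ₗ[R] Z 1)) : IsPGF R K := by
  refine ⟨P, fun i => ModuleCat.ofHom ((f i) ∘ₗ (g (i+1))), hproj, ?_, ?_, ?_⟩
  · intro i
    beta_reduce
    exact splice_exact (g ((i+1)+1)) (f (i+1)) (g (i+1)) (f i)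
      (hses ((i+1)+1)).2.1 (hses (i+1)).2.2 (hses i).1
  · intro E hE i
    beta_reduce
    rw [ModuleCat.hom_ofHom, ModuleCat.hom_ofHom, LinearMap.lTensor_comp, LinearMap.lTensor_comp]
    exact splice_exact _ _ _ _
      (LinearMap.lTensor_surjective _ (hses ((i+1)+1)).2.1)
      (lTensor_exact _ (hses (i+1)).2.2 (hses (i+1)).2.1)
      (htor E hE i)
  · beta_reduce
    have h1 : LinearMap.range ((f 0) ∘ₗ (g (0+1))) = LinearMap.range (f 0) :=
      LinearMap.range_comp_of_range_eq_top _ (LinearMap.range_eq_top.mpr (hses (0+1)).2.1)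
    obtain ⟨e⟩ := hKZ
    exact ⟨(e.trans (LinearEquiv.ofInjective (f 0) (hses 0).1)).trans
      (LinearEquiv.ofEq _ _ h1.symm)⟩

lemma isPGF_of_steps (C : ModuleCat.{u} R → Prop)
    (K : ModuleCat.{u} R) (hK : C K)
    (stepL : ∀ Z : ModuleCat.{u} R, C Z → ∃ (P Z' : ModuleCat.{u} R)
      (f : Z' →ₗ[R] P) (g : P →ₗ[R] Z),
      Module.Projective R P ∧ IsSES R (ModuleCat.ofHom f) (ModuleCat.ofHom g) ∧ C Z')
    (stepR : ∀ Z : ModuleCat.{u} R, C Z → ∃ (P Z' : ModuleCat.{u} R)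
      (f : Z →ₗ[R] P) (g : P →ₗ[R] Z'),
      Module.Projective R P ∧ IsSES R (ModuleCat.ofHom f) (ModuleCat.ofHom g) ∧ C Z')
    (htor : ∀ (E : ModuleCat.{u} R), Module.Injective R E →
      ∀ (A F B : ModuleCat.{u} R) (i : A →ₗ[R] F) (p : F →ₗ[R] B),
        IsSES R (ModuleCat.ofHom i) (ModuleCat.ofHom p) → Module.Projective R F → C B →
        Function.Injective (LinearMap.lTensor E i)) :
    IsPGF R K := by
  classical
  have stepL' : ∀ Z : {Z : ModuleCat.{u} R // C Z}, ∃ (P : ModuleCat.{u} R)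
      (Z' : {Z : ModuleCat.{u} R // C Z}) (f : Z'.1 →ₗ[R] P) (g : P →ₗ[R] Z.1),
      Module.Projective R P ∧ IsSES R (ModuleCat.ofHom f) (ModuleCat.ofHom g) := by
    intro Z
    obtain ⟨P, Z', f, g, hP, hs, hC⟩ := stepL Z.1 Z.2
    exact ⟨P, ⟨Z', hC⟩, f, g, hP, hs⟩
  have stepR' : ∀ Z : {Z : ModuleCat.{u} R // C Z}, ∃ (P : ModuleCat.{u} R)
      (Z' : {Z : ModuleCat.{u} R // C Z}) (f : Z.1 →ₗ[R] P) (g : P →ₗ[R] Z'.1),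
      Module.Projective R P ∧ IsSES R (ModuleCat.ofHom f) (ModuleCat.ofHom g) := by
    intro Z
    obtain ⟨P, Z', f, g, hP, hs, hC⟩ := stepR Z.1 Z.2
    exact ⟨P, ⟨Z', hC⟩, f, g, hP, hs⟩
  choose PL ZL fL gL hPL hsL using stepL'
  choose PR ZR fR gR hPR hsR using stepR'
  let K0 : {Z : ModuleCat.{u} R // C Z} := ⟨K, hK⟩
  let lseq : ℕ → {Z : ModuleCat.{u} R // C Z} := fun j => Nat.rec K0 (fun _ ih => ZL ih) j
  let rseq : ℕ → {Z : ModuleCat.{u} R // C Z} := fun j => Nat.rec K0 (fun _ ih => ZR ih) j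
  refine isPGF_of_chain K
    (fun k => (match k with
      | Int.ofNat 0 => ZR (rseq 0)
      | Int.ofNat (j+1) => lseq j
      | Int.negSucc j => ZR (rseq (j+1))).1)
    (fun k => match k with
      | Int.ofNat 0 => PR (rseq 0)
      | Int.ofNat (j+1) => PL (lseq j)
      | Int.negSucc j => PR (rseq (j+1)))
    (fun k => match k with
      | Int.ofNat 0 => fR (rseq 0)
      | Int.ofNat (j+1) => fL (lseq j)
      | Int.negSucc 0 => fR (rseq 1)
      | Int.negSucc (j+1) => fR (rseq (j+2)))
    (fun k => match k with
      | Int.ofNat 0 => gR (rseq 0)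
      | Int.ofNat (j+1) => gL (lseq j)
      | Int.negSucc j => gR (rseq (j+1)))
    ?_ ?_ ?_ ?_
  · intro k
    cases k with
    | ofNat j =>
      cases j with
      | zero => exact hPR (rseq 0)
      | succ j => exact hPL (lseq j)
    | negSucc j => exact hPR (rseq (j+1))
  · intro k
    cases k with
    | ofNat j =>
      cases j with
      | zero => exact hsR (rseq 0)
      | succ j => exact hsL (lseq j)
    | negSucc j =>
      cases j with
      | zero => exact hsR (rseq 1)
      | succ j => exact hsR (rseq (j+2))
  · intro E hE k
    cases k with
    | ofNat j =>
      cases j with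
      | zero => exact htor E hE _ _ _ (fR (rseq 0)) (gR (rseq 0)) (hsR _) (hPR _) (ZR (rseq 0)).2
      | succ j => exact htor E hE _ _ _ (fL (lseq j)) (gL (lseq j)) (hsL _) (hPL _) (lseq j).2
    | negSucc j =>
      cases j with
      | zero => exact htor E hE _ _ _ (fR (rseq 1)) (gR (rseq 1)) (hsR _) (hPR _) (ZR (rseq 1)).2
      | succ j =>
        exact htor E hE _ _ _ (fR (rseq (j+2))) (gR (rseq (j+2))) (hsR _) (hPR _) (ZR (rseq (j+2))).2
  · exact ⟨LinearEquiv.refl R K⟩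

end Assembly

variable (R)

/-- if every injective module has projective dimension at most `n` and
every injective module has flat dimension at most `n`, then every module has
PGF dimension at most `n`. -/
theorem stmt7 (n : ℕ)
    (h1 : ∀ E : ModuleCat.{u} R, Module.Injective R E → PdLE R n E)
    (h2 : ∀ E : ModuleCat.{u} R, Module.Injective R E → FdLE R n E) :
    ∀ M : ModuleCat.{u} R, PGFdLE R n M := by
  intro M
  obtain ⟨K, hK⟩ := exists_syz n M
  refine pgf_of_syz hK ?_
  refine isPGF_of_steps (IsSyz R n) K ⟨M, hK⟩ ?_ ?_ ?_
  · -- stepL : free covers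
    intro Z hZ
    classical
    obtain ⟨M0, hZM⟩ := hZ
    set F : ModuleCat.{u} R := ModuleCat.of R (Z →₀ R) with hF
    let π : F →ₗ[R] Z := Finsupp.linearCombination R _root_.id
    have hπ : Function.Surjective π := fun m =>
      ⟨Finsupp.single m 1, by
        show Finsupp.linearCombination R _root_.id (Finsupp.single m 1) = m
        rw [Finsupp.linearCombination_single, one_smul]; rfl⟩
    set Z' : ModuleCat.{u} R := ModuleCat.of R (LinearMap.ker π) with hZ'
    have hproj : Module.Projective R F := inferInstanceAs (Module.Projective R (Z →₀ R))
    let ι : Z' ⟶ F := ModuleCat.ofHom (Submodule.subtype (LinearMap.ker π))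
    have hses : IsSES R ι (ModuleCat.ofHom π) := by
      refine ⟨Subtype.coe_injective, hπ, ?_⟩
      rw [LinearMap.exact_iff]; exact (Submodule.range_subtype _).symm
    refine ⟨F, Z', ι.hom, π, hproj, hses, ?_⟩
    exact isSyz_of_succ (nthSyzOf_succ_of_ses _ _ hses hproj hZM)
  · -- stepR : cone step into an injective envelope
    intro Z hZ
    obtain ⟨M0, hZM⟩ := hZ
    set E0 : ModuleCat.{u} R := Injective.under M0 with hE0
    set u0 : M0 ⟶ E0 := Injective.ι M0 with hu0
    have huinj : Function.Injective u0 := (ModuleCat.mono_iff_injective u0).mp inferInstance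
    have hEinj : Module.Injective R ↥E0 :=
      (Module.injective_iff_injective_object R ↥E0).mpr (Injective.injective_under M0)
    have hPd : PdLE R n E0 := h1 E0 hEinj
    obtain ⟨P, K', f, g, hP, hses, hsyz⟩ := coneStep n M0 E0 u0.hom huinj hPd Z hZM
    exact ⟨P, K', f.hom, g.hom, hP, hses, ⟨_, hsyz⟩⟩
  · -- Tor vanishing
    intro E hE A F B i p hs hF hB
    haveI := hF
    exact tor_vanish n E B (h2 E hE) hB A F i p hs.1 hs.2.1 hs.2.2
      (inferInstanceAs (Module.Flat R F))



end GorensteinPaper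
end

section
/- The global PGF dimension of R is zero if and only if R is quasi-Frobenius, i.e., every injective left R-module is projective and every injective right R-module is projective. -/
universe u

open CategoryTheory TensorProduct

namespace GorensteinPaper

variable (R : Type u) [CommRing R]

section QFAux

open LinearMap

variable {R}

/-- Free cover. -/
noncomputable def FMod (N : ModuleCat.{u} R) : ModuleCat.{u} R :=
  ModuleCat.of R (↥N →₀ R)

noncomputable def piMod (N : ModuleCat.{u} R) : FMod N →ₗ[R] N :=
  Finsupp.linearCombination R (id : N → N)

lemma piMod_surj (N : ModuleCat.{u} R) : Function.Surjective (piMod N) :=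
  Finsupp.linearCombination_id_surjective R ↥N

/-- Injective envelope (any injective module containing `N`). -/
noncomputable def JMod (N : ModuleCat.{u} R) : ModuleCat.{u} R :=
  CategoryTheory.Injective.under N

noncomputable def eMod (N : ModuleCat.{u} R) : N →ₗ[R] JMod N :=
  (CategoryTheory.Injective.ι N).hom

lemma eMod_inj (N : ModuleCat.{u} R) : Function.Injective (eMod N) :=
  (ModuleCat.mono_iff_injective (CategoryTheory.Injective.ι N)).mp inferInstance

lemma JMod_injective (N : ModuleCat.{u} R) : Module.Injective R (JMod N) :=
  Module.injective_module_of_injective_object R (JMod N)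
    (inj := CategoryTheory.Injective.injective_under N)

/-- Iterated syzygies on the left. -/
noncomputable def ZMod (M : ModuleCat.{u} R) : ℕ → ModuleCat.{u} R
  | 0 => M
  | n + 1 => ModuleCat.of R (ker (piMod (ZMod M n)))

noncomputable def iotaMod (M : ModuleCat.{u} R) (n : ℕ) :
    ZMod M (n + 1) →ₗ[R] FMod (ZMod M n) :=
  Submodule.subtype (ker (piMod (ZMod M n)))

/-- Iterated cosyzygies on the right. -/
noncomputable def AMod (M : ModuleCat.{u} R) : ℕ → ModuleCat.{u} R
  | 0 => M
  | n + 1 => ModuleCat.of R (↥(JMod (AMod M n)) ⧸ range (eMod (AMod M n)))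

noncomputable def qMod (M : ModuleCat.{u} R) (n : ℕ) :
    JMod (AMod M n) →ₗ[R] AMod M (n + 1) :=
  Submodule.mkQ (range (eMod (AMod M n)))

/-- The two-sided complex of projectives. -/
noncomputable def PC (M : ModuleCat.{u} R) : ℤ → ModuleCat.{u} R
  | .ofNat 0 => JMod (AMod M 0)
  | .ofNat (n + 1) => FMod (ZMod M n)
  | .negSucc n => JMod (AMod M (n + 1))

noncomputable def dC (M : ModuleCat.{u} R) : ∀ i : ℤ, PC M (i + 1) ⟶ PC M i
  | .ofNat 0 => ModuleCat.ofHom ((eMod (AMod M 0)).comp (piMod (ZMod M 0)))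
  | .ofNat (n + 1) => ModuleCat.ofHom ((iotaMod M n).comp (piMod (ZMod M (n + 1))))
  | .negSucc 0 => ModuleCat.ofHom ((eMod (AMod M 1)).comp (qMod M 0))
  | .negSucc (n + 1) => ModuleCat.ofHom ((eMod (AMod M (n + 2))).comp (qMod M (n + 1)))

lemma exact_comp_comp {A B C D E : ModuleCat.{u} R}
    (p : A →ₗ[R] B) (uu : B →ₗ[R] C) (q : C →ₗ[R] D) (v : D →ₗ[R] E)
    (hp : Function.Surjective p) (hv : Function.Injective v)
    (h : range uu = ker q) :
    Function.Exact (uu.comp p) (v.comp q) := by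
  rw [LinearMap.exact_iff, ker_comp_of_ker_eq_bot _ (ker_eq_bot.mpr hv),
    range_comp_of_range_eq_top _ (range_eq_top.mpr hp), h]

end QFAux

/-- the global PGF dimension of `R` is zero iff `R` is quasi-Frobenius,
i.e. every injective module is projective. -/
theorem stmt19 :
    (∀ M : ModuleCat.{u} R, PGFdLE R 0 M) ↔
      (∀ E : ModuleCat.{u} R, Module.Injective R E → Module.Projective R E) := by
  constructor
  · intro h E hE
    have hP : IsPGF R E := h E
    obtain ⟨P, d, hproj, -, -, ⟨e⟩⟩ := hP
    haveI := hproj 0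
    set i : ↥E →ₗ[R] ↥(P 0) :=
      (Submodule.subtype (LinearMap.range (d 0).hom)).comp e.toLinearMap with hi
    have hinj : Function.Injective i :=
      (Submodule.injective_subtype _).comp e.injective
    obtain ⟨r, hr⟩ := hE.out i hinj LinearMap.id
    exact Module.Projective.of_split i r (LinearMap.ext hr)
  · intro h M
    show IsPGF R M
    refine ⟨PC M, dC M, ?_, ?_, ?_, ?_⟩
    · intro i
      match i with
      | .ofNat 0 => exact h _ (JMod_injective _)
      | .negSucc n => exact h _ (JMod_injective _)
      | .ofNat (n + 1) =>
          show Module.Projective R (↥(ZMod M n) →₀ R)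
          infer_instance
    · intro i
      match i with
      | .ofNat 0 =>
        -- i = 0 : exact (dC 1) (dC 0)
        exact exact_comp_comp (piMod _) (iotaMod M 0) (piMod (ZMod M 0)) (eMod (AMod M 0))
          (piMod_surj _) (eMod_inj _) (Submodule.range_subtype _)
      | .ofNat (n + 1) =>
        exact exact_comp_comp (piMod _) (iotaMod M (n + 1)) (piMod (ZMod M (n + 1)))
          (iotaMod M n) (piMod_surj _) (Submodule.injective_subtype _)
          (Submodule.range_subtype _)
      | .negSucc 0 =>
        exact exact_comp_comp (piMod (ZMod M 0)) (eMod (AMod M 0)) (qMod M 0)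
          (eMod (AMod M 1)) (piMod_surj _) (eMod_inj _) (Submodule.ker_mkQ _).symm
      | .negSucc 1 =>
        exact exact_comp_comp (qMod M 0) (eMod (AMod M 1)) (qMod M 1)
          (eMod (AMod M 2)) (Submodule.mkQ_surjective _) (eMod_inj _)
          (Submodule.ker_mkQ _).symm
      | .negSucc (n + 2) =>
        exact exact_comp_comp (qMod M (n + 1)) (eMod (AMod M (n + 2))) (qMod M (n + 2))
          (eMod (AMod M (n + 3))) (Submodule.mkQ_surjective _) (eMod_inj _)
          (Submodule.ker_mkQ _).symm
    · intro E hE i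
      haveI : Module.Projective R ↥E := h E hE
      haveI : Module.Flat R ↥E := inferInstance
      refine Module.Flat.lTensor_exact ↥E ?_
      match i with
      | .ofNat 0 =>
        exact exact_comp_comp (piMod _) (iotaMod M 0) (piMod (ZMod M 0)) (eMod (AMod M 0))
          (piMod_surj _) (eMod_inj _) (Submodule.range_subtype _)
      | .ofNat (n + 1) =>
        exact exact_comp_comp (piMod _) (iotaMod M (n + 1)) (piMod (ZMod M (n + 1)))
          (iotaMod M n) (piMod_surj _) (Submodule.injective_subtype _)
          (Submodule.range_subtype _)
      | .negSucc 0 =>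
        exact exact_comp_comp (piMod (ZMod M 0)) (eMod (AMod M 0)) (qMod M 0)
          (eMod (AMod M 1)) (piMod_surj _) (eMod_inj _) (Submodule.ker_mkQ _).symm
      | .negSucc 1 =>
        exact exact_comp_comp (qMod M 0) (eMod (AMod M 1)) (qMod M 1)
          (eMod (AMod M 2)) (Submodule.mkQ_surjective _) (eMod_inj _)
          (Submodule.ker_mkQ _).symm
      | .negSucc (n + 2) =>
        exact exact_comp_comp (qMod M (n + 1)) (eMod (AMod M (n + 2))) (qMod M (n + 2))
          (eMod (AMod M (n + 3))) (Submodule.mkQ_surjective _) (eMod_inj _)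
          (Submodule.ker_mkQ _).symm
    · have hr : LinearMap.range (dC M (0 : ℤ)).hom = LinearMap.range (eMod (AMod M 0)) :=
        LinearMap.range_comp_of_range_eq_top _
          (LinearMap.range_eq_top.mpr (piMod_surj (ZMod M 0)))
      exact ⟨(LinearEquiv.ofInjective (eMod (AMod M 0)) (eMod_inj _)).trans
        (LinearEquiv.ofEq _ _ hr.symm)⟩

end GorensteinPaper
end
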